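/- For the specific 2-state and 3-state automata of Example 2 of the paper: SUP1 over {11,13,15,17,122} and SUP2 over {17,22} (sharing event 17), with event 22 replaced by signal 122 in SUP1 and channel over {22,122}, the resulting product SUP' contains the string 22·13 whose projection (erasing 122) is not in L(SUP1 ∥ SUP2 with 122 restored to 22); hence delay-robustness fails and SUP' is blocking: there is a reachable state of SUP' from which no marked state is reachable. -/

import Mathlib

def pclos {A : Type*} (L : Set (List A)) : Set (List A) := {s | ∃ u, s ++ u ∈ L}

def nproj {A : Type*} (p : A → Bool) (w : List A) : List A := w.filter p

def runF {Q A : Type*} (δ : Q → A → Option Q) (q : Q) (w : List A) : Option Q :=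
  w.foldl (fun s a => s.bind fun q' => δ q' a) (some q)

/-- `SUP1` of Example 2: `0 --22--> 1`, `0 --13--> 2`, `1 --15--> 3` (marked), `2 --17--> 3`. -/
def d1 : ℕ → ℕ → Option ℕ := fun q a =>
  if q = 0 ∧ a = 22 then some 1
  else if q = 0 ∧ a = 13 then some 2
  else if q = 1 ∧ a = 15 then some 3
  else if q = 2 ∧ a = 17 then some 3
  else none

/-- `SUP1'`: `SUP1` with event 22 replaced by the signal event 122. -/
def d1' : ℕ → ℕ → Option ℕ := fun q a =>
  if q = 0 ∧ a = 122 then some 1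
  else if q = 0 ∧ a = 13 then some 2
  else if q = 1 ∧ a = 15 then some 3
  else if q = 2 ∧ a = 17 then some 3
  else none

/-- `SUP2` of Example 2: `0 --22--> 1`, `1 --17--> 2` (marked). -/
def d2 : ℕ → ℕ → Option ℕ := fun q a =>
  if q = 0 ∧ a = 22 then some 1
  else if q = 1 ∧ a = 17 then some 2
  else none

/-- The channel over `{22, 122}`: `0 --22--> 1`, `1 --122--> 0` (0 marked). -/
def dC : ℕ → ℕ → Option ℕ := fun q a =>
  if q = 0 ∧ a = 22 then some 1
  else if q = 1 ∧ a = 122 then some 0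
  else none

def a1 : ℕ → Bool := fun a => a == 22 || a == 13 || a == 15 || a == 17
def a1' : ℕ → Bool := fun a => a == 122 || a == 13 || a == 15 || a == 17
def a2 : ℕ → Bool := fun a => a == 22 || a == 17
def aC : ℕ → Bool := fun a => a == 22 || a == 122

/-- `L(SUP) = L(SUP1 ∥ SUP2)`. -/
def LS : Set (List ℕ) :=
  {s | (∀ a ∈ s, a1 a = true ∨ a2 a = true) ∧
       runF d1 0 (nproj a1 s) ≠ none ∧ runF d2 0 (nproj a2 s) ≠ none}

/-- `L(SUP') = L(SUP1' ∥ CHNL ∥ SUP2)`. -/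
def LS' : Set (List ℕ) :=
  {s | (∀ a ∈ s, a1' a = true ∨ a2 a = true ∨ aC a = true) ∧
       runF d1' 0 (nproj a1' s) ≠ none ∧ runF dC 0 (nproj aC s) ≠ none ∧
       runF d2 0 (nproj a2 s) ≠ none}

/-- `L_m(SUP')`: all three components reach their marked states (3, 0 and 2 resp.). -/
def LmS' : Set (List ℕ) :=
  {s | (∀ a ∈ s, a1' a = true ∨ a2 a = true ∨ aC a = true) ∧
       runF d1' 0 (nproj a1' s) = some 3 ∧ runF dC 0 (nproj aC s) = some 0 ∧
       runF d2 0 (nproj a2 s) = some 2}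

/-- Example 2: the string `22·13` is in `L(SUP')` but its projection (erasing 122) is not in
`L(SUP)`; hence delay-robustness fails and `SUP'` is blocking: some reachable string of
`SUP'` has no extension to a marked string. -/

lemma foldl_none {Q A : Type*} (δ : Q → A → Option Q) (w : List A) :
    w.foldl (fun s a => s.bind fun q' => δ q' a) none = none := by
  induction w with
  | nil => rfl
  | cons a t ih => simpa using ih

lemma runF_cons {Q A : Type*} (δ : Q → A → Option Q) (q : Q) (a : A) (w : List A) :
    runF δ q (a :: w) = (δ q a).bind (fun q' => runF δ q' w) := by
  cases h : δ q a with
  | none => simp [runF, h, foldl_none]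
  | some q' => simp [runF, h]

lemma dC_no_return : ∀ w : List ℕ, runF dC 1 w = some 0 → 122 ∈ w := by
  intro w
  induction w with
  | nil => intro h; simp [runF] at h
  | cons a t ih =>
    intro h
    rw [runF_cons] at h
    by_cases ha : a = 122
    · simp [ha]
    · have : dC 1 a = none := by simp [dC, ha]
      rw [this] at h; simp at h

lemma d1'_dead : ∀ (w : List ℕ) (q : ℕ), (q = 2 ∨ q = 3) → 122 ∈ w →
    runF d1' q w = none := by
  intro w
  induction w with
  | nil => intro q _ h; simp at h
  | cons a t ih =>
    intro q hq hm
    rw [runF_cons]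
    rcases hq with rfl | rfl
    · by_cases ha : a = 17
      · have : d1' 2 a = some 3 := by simp [d1', ha]
        rw [this]
        have : (122 : ℕ) ∈ t := by
          rcases List.mem_cons.1 hm with h | h
          · omega
          · exact h
        simpa using ih 3 (Or.inr rfl) this
      · have : d1' 2 a = none := by simp [d1', ha]
        rw [this]; rfl
    · have : d1' 3 a = none := by simp [d1']
      rw [this]; rfl

lemma blocked : ∀ v, [22, 13] ++ v ∉ LmS' := by
  intro v hv
  obtain ⟨-, h1, hc, -⟩ := hv
  have e1 : nproj a1' ([22, 13] ++ v) = 13 :: nproj a1' v := by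
    simp [nproj, a1']
  have eC : nproj aC ([22, 13] ++ v) = 22 :: nproj aC v := by
    simp [nproj, aC]
  rw [eC, runF_cons] at hc
  have : dC 0 22 = some 1 := by simp [dC]
  rw [this] at hc
  simp at hc
  have hmem : (122 : ℕ) ∈ nproj aC v := dC_no_return _ hc
  have hmem' : (122 : ℕ) ∈ v := (List.mem_filter.1 hmem).1
  have hmem1 : (122 : ℕ) ∈ nproj a1' v :=
    List.mem_filter.2 ⟨hmem', by simp [a1']⟩
  rw [e1, runF_cons] at h1
  have : d1' 0 13 = some 2 := by simp [d1']
  rw [this] at h1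
  simp at h1
  rw [d1'_dead _ 2 (Or.inl rfl) hmem1] at h1
  exact Option.some_ne_none _ h1.symm

lemma mem_LS' : [22, 13] ∈ LS' := by
  refine ⟨?_, ?_, ?_, ?_⟩
  · intro a ha; fin_cases ha <;> simp [a1', a2, aC]
  · show runF d1' 0 (nproj a1' [22, 13]) ≠ none
    have : nproj a1' [22, 13] = [13] := by simp [nproj, a1']
    rw [this]; simp [runF, d1']
  · show runF dC 0 (nproj aC [22, 13]) ≠ none
    have : nproj aC [22, 13] = [22] := by simp [nproj, aC]
    rw [this]; simp [runF, dC]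
  · show runF d2 0 (nproj a2 [22, 13]) ≠ none
    have : nproj a2 [22, 13] = [22] := by simp [nproj, a2]
    rw [this]; simp [runF, d2]

theorem stmt18 :
    [22, 13] ∈ LS' ∧
    nproj (fun a => !(a == 122)) [22, 13] ∉ LS ∧
    (∃ s ∈ LS', ∀ v, s ++ v ∉ LmS') ∧
    LS' ≠ pclos LmS' := by
  refine ⟨mem_LS', ?_, ⟨[22, 13], mem_LS', blocked⟩, ?_⟩
  · intro h
    obtain ⟨-, h1, -⟩ := h
    have e : nproj (fun a => !(a == 122)) [22, 13] = [22, 13] := by simp [nproj]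
    rw [e] at h1
    have e2 : nproj a1 [22, 13] = [22, 13] := by simp [nproj, a1]
    rw [e2] at h1
    exact h1 (by simp [runF, d1])
  · intro h
    have : [22, 13] ∈ pclos LmS' := h ▸ mem_LS'
    obtain ⟨u, hu⟩ := this
    exact blocked u hu
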